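/- Consider a single machine and jobs released over time where job j has release time r_j and size p_j. In the FIFO schedule (k = 1 case of the multi-machine lemma), if the total size of jobs released in any interval [a, b] is at most (b − a) + D, then FIFO is an optimal non-preemptive schedule for minimizing maximum flow time and achieves maximum flow time at most D; moreover any schedule has maximum flow time at least (Σ_{j released in [a,b]} p_j − (b − a)) for some witness interval, so D is tight when attained. -/
import Mathlib


open scoped Classical

/-- Single-machine FIFO: with the backlog condition, FIFO achieves maximum flow
time at most `D`; FIFO is optimal for maximum flow time among all feasible
non-preemptive schedules; and every feasible schedule has maximum flow time at
least `(Σ_{j released in [a,b]} p_j) − (b − a)` for every interval `[a, b]`. -/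
theorem stmt_19 (n : ℕ) (hn : 0 < n) (r p : Fin n → ℝ) (D : ℝ) (hD : 0 ≤ D)
    (hr : ∀ j, 0 ≤ r j) (hp : ∀ j, 0 ≤ p j)
    (s : Fin n → ℝ)
    (hstart : ∀ j, r j ≤ s j)
    (hdisj : ∀ i j, i ≠ j → s i + p i ≤ s j ∨ s j + p j ≤ s i)
    (hfifo : ∀ i j, s i < s j → r i ≤ r j)
    (hbusy : ∀ j t, r j ≤ t → t < s j → ∃ i, s i ≤ t ∧ t < s i + p i)
    (hbacklog : ∀ a b : ℝ, a ≤ b →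
      ∑ j ∈ Finset.univ.filter (fun j => a ≤ r j ∧ r j ≤ b), p j ≤ (b - a) + D) :
    (∀ j, s j + p j - r j ≤ D) ∧
    (∀ s' : Fin n → ℝ, (∀ j, r j ≤ s' j) →
      (∀ i j, i ≠ j → s' i + p i ≤ s' j ∨ s' j + p j ≤ s' i) →
      ∀ j, ∃ j', s j + p j - r j ≤ s' j' + p j' - r j') ∧
    (∀ s' : Fin n → ℝ, (∀ j, r j ≤ s' j) →
      (∀ i j, i ≠ j → s' i + p i ≤ s' j ∨ s' j + p j ≤ s' i) →
      ∀ a b : ℝ, a ≤ b → ∃ j,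
        (∑ i ∈ Finset.univ.filter (fun i => a ≤ r i ∧ r i ≤ b), p i) - (b - a)
          ≤ s' j + p j - r j) := by
  classical
  -- Packing lemma: disjoint intervals in [a, C] have total length ≤ C - a.
  have pack : ∀ (σ : Fin n → ℝ),
      (∀ i j, i ≠ j → σ i + p i ≤ σ j ∨ σ j + p j ≤ σ i) →
      ∀ (S : Finset (Fin n)) (a C : ℝ), (∀ i ∈ S, a ≤ σ i) →
      (∀ i ∈ S, σ i + p i ≤ C) → a ≤ C → ∑ i ∈ S, p i ≤ C - a := by
    intro σ hd S a C hA hC haC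
    have hvol : ∀ i ∈ S, MeasureTheory.volume (Set.Ico (σ i) (σ i + p i))
        = ENNReal.ofReal (p i) := by
      intro i _; rw [Real.volume_Ico]; ring_nf
    have hdisjS : (↑S : Set (Fin n)).PairwiseDisjoint
        (fun i => Set.Ico (σ i) (σ i + p i)) := by
      intro i _ j _ hij
      have key : ∀ u v : Fin n, σ u + p u ≤ σ v →
          Disjoint (Set.Ico (σ u) (σ u + p u)) (Set.Ico (σ v) (σ v + p v)) := by
        intro u v h
        refine Set.disjoint_left.mpr (fun x hx hx' => ?_)
        exact absurd hx'.1 (not_le.mpr (lt_of_lt_of_le hx.2 h))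
      rcases hd i j hij with h | h
      · exact key i j h
      · exact (key j i h).symm
    have hunion : (⋃ i ∈ S, Set.Ico (σ i) (σ i + p i)) ⊆ Set.Ico a C := by
      intro x hx
      simp only [Set.mem_iUnion] at hx
      obtain ⟨i, hi, hx⟩ := hx
      exact ⟨le_trans (hA i hi) hx.1, lt_of_lt_of_le hx.2 (hC i hi)⟩
    have hmeas := MeasureTheory.measure_biUnion_finset (μ := MeasureTheory.volume) hdisjS
      (fun i _ => measurableSet_Ico (a := σ i) (b := σ i + p i))
    have hle : ∑ i ∈ S, ENNReal.ofReal (p i) ≤ ENNReal.ofReal (C - a) := by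
      calc ∑ i ∈ S, ENNReal.ofReal (p i)
          = MeasureTheory.volume (⋃ i ∈ S, Set.Ico (σ i) (σ i + p i)) := by
            rw [hmeas]; exact (Finset.sum_congr rfl hvol).symm
        _ ≤ MeasureTheory.volume (Set.Ico a C) := MeasureTheory.measure_mono hunion
        _ = ENNReal.ofReal (C - a) := Real.volume_Ico
    rw [← ENNReal.ofReal_sum_of_nonneg (fun i _ => hp i)] at hle
    exact (ENNReal.ofReal_le_ofReal_iff (by linarith)).mp hle
  -- Part 3: lower bound for any feasible schedule.
  have key3 : ∀ s' : Fin n → ℝ, (∀ j, r j ≤ s' j) →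
      (∀ i j, i ≠ j → s' i + p i ≤ s' j ∨ s' j + p j ≤ s' i) →
      ∀ a b : ℝ, a ≤ b → ∃ j,
        (∑ i ∈ Finset.univ.filter (fun i => a ≤ r i ∧ r i ≤ b), p i) - (b - a)
          ≤ s' j + p j - r j := by
    intro s' hstart' hdisj' a b hab
    set S := Finset.univ.filter (fun i => a ≤ r i ∧ r i ≤ b) with hS
    by_cases hSe : S.Nonempty
    · obtain ⟨j, hjS, hjmax⟩ := S.exists_max_image (fun i => s' i + p i) hSe
      have hmem : ∀ i ∈ S, a ≤ r i ∧ r i ≤ b := by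
        intro i hi; simpa [hS] using hi
      have hsum : ∑ i ∈ S, p i ≤ (s' j + p j) - a := by
        refine pack s' hdisj' S a (s' j + p j)
          (fun i hi => le_trans (hmem i hi).1 (hstart' i)) hjmax ?_
        have := (hmem j hjS).1
        have := hstart' j
        have := hp j
        linarith
      have hrjb := (hmem j hjS).2
      exact ⟨j, by linarith⟩
    · have hempty : S = ∅ := Finset.not_nonempty_iff_eq_empty.mp hSe
      refine ⟨⟨0, hn⟩, ?_⟩
      have h1 := hstart' ⟨0, hn⟩
      have h2 := hp ⟨0, hn⟩
      rw [hempty]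
      simp only [Finset.sum_empty]
      linarith
  -- Key FIFO lemma.
  have keyQ : ∀ j : Fin n, ∃ a, a ≤ r j ∧ s j + p j ≤ a +
      ∑ i ∈ Finset.univ.filter (fun i => (a ≤ r i ∧ r i ≤ r j) ∧ s i ≤ s j), p i := by
    have main : ∀ m : ℕ, ∀ j : Fin n,
        (Finset.univ.filter (fun i => s i < s j)).card = m → ∃ a, a ≤ r j ∧
        s j + p j ≤ a +
          ∑ i ∈ Finset.univ.filter (fun i => (a ≤ r i ∧ r i ≤ r j) ∧ s i ≤ s j), p i := by
      intro m
      induction m using Nat.strong_induction_on with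
      | _ m ih =>
        intro j hcard
        rcases eq_or_lt_of_le (hstart j) with heq | hlt
        · refine ⟨r j, le_refl _, ?_⟩
          have hjmem : j ∈ Finset.univ.filter
              (fun i => (r j ≤ r i ∧ r i ≤ r j) ∧ s i ≤ s j) := by simp
          have hsum := Finset.single_le_sum (f := p) (fun i _ => hp i) hjmem
          linarith
        · -- machine is busy just before s j; find job ending exactly at s j
          obtain ⟨w, hw1, hw2⟩ := hbusy j (r j) le_rfl hlt
          have hwT : s w < s j := lt_of_le_of_lt hw1 hlt
          set T := Finset.univ.filter (fun i => s i < s j) with hT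
          have hwmem : w ∈ T := by simp [hT, hwT]
          obtain ⟨i0, hi0T, hi0max⟩ := T.exists_max_image (fun i => s i + p i) ⟨w, hwmem⟩
          have hi0lt : s i0 < s j := by simpa [hT] using hi0T
          have hM : s j ≤ s i0 + p i0 := by
            by_contra h
            push_neg at h
            have hr0 : r j ≤ s i0 + p i0 :=
              le_of_lt (lt_of_lt_of_le hw2 (hi0max w hwmem))
            obtain ⟨i2, h2a, h2b⟩ := hbusy j (s i0 + p i0) hr0 h
            have hi2T : i2 ∈ T := by
              simp [hT]; exact lt_of_le_of_lt h2a h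
            exact absurd (hi0max i2 hi2T) (not_le.mpr h2b)
          have hne : i0 ≠ j := fun h => absurd (h ▸ hi0lt) (lt_irrefl _)
          have hle : s i0 + p i0 ≤ s j := by
            rcases hdisj i0 j hne with h | h
            · exact h
            · exfalso; have := hp j; linarith
          have heq2 : s i0 + p i0 = s j := le_antisymm hle hM
          have hri : r i0 ≤ r j := hfifo i0 j hi0lt
          -- induction hypothesis on i0
          have hsubT : Finset.univ.filter (fun i => s i < s i0) ⊂ T := by
            refine Finset.ssubset_iff_of_subset ?_ |>.mpr ⟨i0, hi0T, by simp⟩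
            intro k hk
            simp only [hT, Finset.mem_filter, Finset.mem_univ, true_and] at hk ⊢
            exact lt_trans hk hi0lt
          have hcard' : (Finset.univ.filter (fun i => s i < s i0)).card < m :=
            hcard ▸ Finset.card_lt_card hsubT
          obtain ⟨a, ha1, ha2⟩ := ih _ hcard' i0 rfl
          refine ⟨a, le_trans ha1 hri, ?_⟩
          set A : Fin n → Finset (Fin n) := fun k =>
            Finset.univ.filter (fun i => (a ≤ r i ∧ r i ≤ r k) ∧ s i ≤ s k) with hA
          have hjnot : j ∉ A i0 := by
            simp only [hA, Finset.mem_filter, Finset.mem_univ, true_and, not_and]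
            intro _ h; exact absurd h (not_le.mpr hi0lt)
          have hsub : insert j (A i0) ⊆ A j := by
            intro k hk
            rcases Finset.mem_insert.mp hk with h | h
            · subst h
              simp only [hA, Finset.mem_filter, Finset.mem_univ, true_and]
              exact ⟨⟨le_trans ha1 hri, le_refl _⟩, le_refl _⟩
            · simp only [hA, Finset.mem_filter, Finset.mem_univ, true_and] at h ⊢
              exact ⟨⟨h.1.1, le_trans h.1.2 hri⟩, le_trans h.2 (le_of_lt hi0lt)⟩
          have hsum : ∑ i ∈ insert j (A i0), p i ≤ ∑ i ∈ A j, p i :=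
            Finset.sum_le_sum_of_subset_of_nonneg hsub (fun i _ _ => hp i)
          rw [Finset.sum_insert hjnot] at hsum
          have : s j + p j ≤ a + (p j + ∑ i ∈ A i0, p i) := by linarith
          calc s j + p j ≤ a + (p j + ∑ i ∈ A i0, p i) := this
            _ ≤ a + ∑ i ∈ A j, p i := by linarith
    intro j
    exact main _ j rfl
  refine ⟨?_, ?_, key3⟩
  · intro j
    obtain ⟨a, ha, h⟩ := keyQ j
    have hsub : Finset.univ.filter (fun i => (a ≤ r i ∧ r i ≤ r j) ∧ s i ≤ s j)
        ⊆ Finset.univ.filter (fun i => a ≤ r i ∧ r i ≤ r j) := by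
      intro k hk
      simp only [Finset.mem_filter, Finset.mem_univ, true_and] at hk ⊢
      exact hk.1
    have hsum := Finset.sum_le_sum_of_subset_of_nonneg hsub (fun i _ _ => hp i)
    have hb := hbacklog a (r j) ha
    linarith
  · intro s' h1 h2 j
    obtain ⟨a, ha, h⟩ := keyQ j
    obtain ⟨j', hj'⟩ := key3 s' h1 h2 a (r j) ha
    refine ⟨j', ?_⟩
    have hsub : Finset.univ.filter (fun i => (a ≤ r i ∧ r i ≤ r j) ∧ s i ≤ s j)
        ⊆ Finset.univ.filter (fun i => a ≤ r i ∧ r i ≤ r j) := by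
      intro k hk
      simp only [Finset.mem_filter, Finset.mem_univ, true_and] at hk ⊢
      exact hk.1
    have hsum := Finset.sum_le_sum_of_subset_of_nonneg hsub (fun i _ _ => hp i)
    linarith
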